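/- For every λ > 0 and every g ∈ H¹, the translated–dilated bubble u(q) = λ·U(δ_λ(g⁻¹·q)) is a positive solution of the CR Yamabe equation on the Heisenberg group: X(X u) + Y(Y u) = −4u³ on all of ℂ×ℝ. -/

import Mathlib

open MeasureTheory Real

/-- The Heisenberg group law on `ℂ × ℝ`:
`(z,t)·(w,s) = (z + w, t + s + 2 Im(z·conj w))`. -/
def heisMul (a b : ℂ × ℝ) : ℂ × ℝ :=
  (a.1 + b.1, a.2 + b.2 + 2 * (a.1 * (starRingEnd ℂ) b.1).im)

/-- The Heisenberg group inverse: `(z,t)⁻¹ = (−z, −t)`. -/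
def heisInv (a : ℂ × ℝ) : ℂ × ℝ := (-a.1, -a.2)

/-- Heisenberg dilations `δ_λ(z,t) = (λz, λ²t)`. -/
def heisDil (l : ℝ) (p : ℂ × ℝ) : ℂ × ℝ := ((l : ℂ) * p.1, l ^ 2 * p.2)

/-- The left-invariant Heisenberg vector field `X f = ∂f/∂x + 2y ∂f/∂t`. -/
noncomputable def heisX (f : ℂ × ℝ → ℝ) (p : ℂ × ℝ) : ℝ :=
  fderiv ℝ f p ((1 : ℂ), (0 : ℝ)) + 2 * p.1.im * fderiv ℝ f p ((0 : ℂ), (1 : ℝ))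

/-- The left-invariant Heisenberg vector field `Y f = ∂f/∂y − 2x ∂f/∂t`. -/
noncomputable def heisY (f : ℂ × ℝ → ℝ) (p : ℂ × ℝ) : ℝ :=
  fderiv ℝ f p (Complex.I, (0 : ℝ)) - 2 * p.1.re * fderiv ℝ f p ((0 : ℂ), (1 : ℝ))

/-- The Jerison–Lee bubble `U(z,t) = (t² + (1+|z|²)²)^{-1/2}` on `H¹ = ℂ × ℝ`. -/
noncomputable def jerisonLeeBubble (p : ℂ × ℝ) : ℝ :=
  (p.2 ^ 2 + (1 + ‖p.1‖ ^ 2) ^ 2) ^ (-(1 / 2 : ℝ))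

/-- The translated–dilated bubble `u(q) = λ·U(δ_λ(g⁻¹·q))`. -/
noncomputable def bubble (l : ℝ) (g : ℂ × ℝ) (q : ℂ × ℝ) : ℝ :=
  l * jerisonLeeBubble (heisDil l (heisMul (heisInv g) q))

/-! ### Auxiliary machinery -/

theorem HasFDerivAt.pow2 {E : Type*} [NormedAddCommGroup E] [NormedSpace ℝ E]
    {f : E → ℝ} {f' : E →L[ℝ] ℝ} {x : E} (h : HasFDerivAt f f' x) :
    HasFDerivAt (fun y => f y ^ 2) ((2 * f x) • f') x := by
  have h2 : HasFDerivAt (fun y => f y * f y) (f x • f' + f x • f') x := h.mul h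
  have heq : (fun y => f y ^ 2) = fun y => f y * f y := by funext y; ring
  rw [heq]
  convert h2 using 1
  ext v
  simp [ContinuousLinearMap.add_apply, ContinuousLinearMap.smul_apply, smul_eq_mul]
  ring

lemma hasF_x (q : ℂ × ℝ) : HasFDerivAt (fun q : ℂ × ℝ => q.1.re)
    (Complex.reCLM.comp (ContinuousLinearMap.fst ℝ ℂ ℝ)) q :=
  (Complex.reCLM.comp (ContinuousLinearMap.fst ℝ ℂ ℝ)).hasFDerivAt
lemma hasF_y (q : ℂ × ℝ) : HasFDerivAt (fun q : ℂ × ℝ => q.1.im)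
    (Complex.imCLM.comp (ContinuousLinearMap.fst ℝ ℂ ℝ)) q :=
  (Complex.imCLM.comp (ContinuousLinearMap.fst ℝ ℂ ℝ)).hasFDerivAt
lemma hasF_t (q : ℂ × ℝ) : HasFDerivAt (fun q : ℂ × ℝ => q.2)
    (ContinuousLinearMap.snd ℝ ℂ ℝ) q :=
  (ContinuousLinearMap.snd ℝ ℂ ℝ).hasFDerivAt

/-- The (squared) defining polynomial of the translated–dilated bubble. -/
noncomputable def FF (l a b s : ℝ) (q : ℂ × ℝ) : ℝ :=
  (l^2*(q.2 - s + 2*(a*q.1.im - b*q.1.re)))^2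
    + (1 + l^2*((q.1.re-a)^2+(q.1.im-b)^2))^2

lemma FF_pos (l a b s : ℝ) (q : ℂ × ℝ) : 0 < FF l a b s q := by
  unfold FF; positivity

noncomputable def PP (l a b s : ℝ) (q : ℂ × ℝ) : ℝ :=
  (q.1.re-a)*(1+l^2*((q.1.re-a)^2+(q.1.im-b)^2))
    + (q.1.im-b)*(l^2*(q.2-s+2*(a*q.1.im-b*q.1.re)))

noncomputable def QQ (l a b s : ℝ) (q : ℂ × ℝ) : ℝ :=
  (q.1.im-b)*(1+l^2*((q.1.re-a)^2+(q.1.im-b)^2))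
    - (q.1.re-a)*(l^2*(q.2-s+2*(a*q.1.im-b*q.1.re)))

lemma bubble_eq (l : ℝ) (g : ℂ × ℝ) :
    bubble l g = fun q => l * (FF l g.1.re g.1.im g.2 q) ^ (-(1/2):ℝ) := by
  funext q
  unfold bubble jerisonLeeBubble heisDil heisMul heisInv FF
  congr 2
  simp only [norm_mul, Complex.norm_real, Real.norm_eq_abs, mul_pow, sq_abs,
    Complex.sq_norm, Complex.normSq_apply, Complex.mul_im,
    Complex.conj_re, Complex.conj_im, Complex.neg_re, Complex.neg_im,
    Complex.add_re, Complex.add_im, Complex.ofReal_re, Complex.ofReal_im]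
  ring

lemma heisX_lvl1 (l a b s : ℝ) :
    heisX (fun q => l * FF l a b s q ^ (-(1/2):ℝ))
      = fun q => -2*l^3 * (PP l a b s q * FF l a b s q ^ (-(3/2):ℝ)) := by
  funext q
  unfold heisX
  simp only [FF, PP]
  have hF := (((((hasF_t q).sub_const s).add ((((hasF_y q).const_mul a).sub
      ((hasF_x q).const_mul b)).const_mul 2)).const_mul (l^2)).pow2).add
    ((((((((hasF_x q).sub_const a).pow2).add
      (((hasF_y q).sub_const b).pow2)).const_mul (l^2)).const_add 1)).pow2)
  have hpos : (0:ℝ) < (l^2*(q.2 - s + 2*(a*q.1.im - b*q.1.re)))^2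
      + (1 + l^2*((q.1.re-a)^2+(q.1.im-b)^2))^2 := FF_pos l a b s q
  have hu := (hF.rpow_const (p := -(1/2)) (Or.inl hpos.ne')).const_mul l
  erw [hu.fderiv]
  simp
  rw [show (-2⁻¹ - 1 : ℝ) = -(3/2) by norm_num]
  ring

lemma heisY_lvl1 (l a b s : ℝ) :
    heisY (fun q => l * FF l a b s q ^ (-(1/2):ℝ))
      = fun q => -2*l^3 * (QQ l a b s q * FF l a b s q ^ (-(3/2):ℝ)) := by
  funext q
  unfold heisY
  simp only [FF, QQ]
  have hF := (((((hasF_t q).sub_const s).add ((((hasF_y q).const_mul a).sub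
      ((hasF_x q).const_mul b)).const_mul 2)).const_mul (l^2)).pow2).add
    ((((((((hasF_x q).sub_const a).pow2).add
      (((hasF_y q).sub_const b).pow2)).const_mul (l^2)).const_add 1)).pow2)
  have hpos : (0:ℝ) < (l^2*(q.2 - s + 2*(a*q.1.im - b*q.1.re)))^2
      + (1 + l^2*((q.1.re-a)^2+(q.1.im-b)^2))^2 := FF_pos l a b s q
  have hu := (hF.rpow_const (p := -(1/2)) (Or.inl hpos.ne')).const_mul l
  erw [hu.fderiv]
  simp
  rw [show (-2⁻¹ - 1 : ℝ) = -(3/2) by norm_num]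
  ring

/-- For every `λ > 0` and `g ∈ H¹`, the translated–dilated bubble
`u(q) = λ·U(δ_λ(g⁻¹·q))` is a positive solution of the CR Yamabe equation:
`X(Xu) + Y(Yu) = −4u³` on all of `ℂ × ℝ`. -/
theorem bubble_solves_CR_Yamabe (l : ℝ) (hl : 0 < l) (g : ℂ × ℝ) :
    ∀ q : ℂ × ℝ,
      0 < bubble l g q ∧
      heisX (heisX (bubble l g)) q + heisY (heisY (bubble l g)) q
        = -4 * (bubble l g q) ^ 3 := by
  intro q
  constructor
  · rw [bubble_eq l g]
    exact mul_pos hl (Real.rpow_pos_of_pos (FF_pos l g.1.re g.1.im g.2 q) _)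
  · rw [bubble_eq l g, heisX_lvl1 l g.1.re g.1.im g.2, heisY_lvl1 l g.1.re g.1.im g.2]
    unfold heisX heisY
    simp only [FF, PP, QQ]
    have hA := (((((((hasF_x q).sub_const g.1.re).pow2).add
      (((hasF_y q).sub_const g.1.im).pow2)).const_mul (l^2)).const_add 1))
    have hT := ((((hasF_t q).sub_const g.2).add ((((hasF_y q).const_mul g.1.re).sub
      ((hasF_x q).const_mul g.1.im)).const_mul 2)).const_mul (l^2))
    have hF := (hT.pow2).add (hA.pow2)
    have hP := (((hasF_x q).sub_const g.1.re).mul hA).add (((hasF_y q).sub_const g.1.im).mul hT)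
    have hQ := (((hasF_y q).sub_const g.1.im).mul hA).sub (((hasF_x q).sub_const g.1.re).mul hT)
    have hpos : (0:ℝ) < (l^2*(q.2 - g.2 + 2*(g.1.re*q.1.im - g.1.im*q.1.re)))^2
        + (1 + l^2*((q.1.re-g.1.re)^2+(q.1.im-g.1.im)^2))^2 := FF_pos l g.1.re g.1.im g.2 q
    have hR := hF.rpow_const (p := -(3/2)) (Or.inl hpos.ne')
    have hX1 := (hP.mul hR).const_mul (-2*l^3)
    have hY1 := (hQ.mul hR).const_mul (-2*l^3)
    erw [hX1.fderiv, hY1.fderiv]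
    simp
    rw [show (-(3/2):ℝ) - 1 = -(5/2) by norm_num]
    set E : ℝ := (l^2*(q.2 - g.2 + 2*(g.1.re*q.1.im - g.1.im*q.1.re)))^2
        + (1 + l^2*((q.1.re-g.1.re)^2+(q.1.im-g.1.im)^2))^2 with hEdef
    have hk : E ^ (-(5/2):ℝ) * E = E ^ (-(3/2):ℝ) := by
      rw [show (-(3/2):ℝ) = -(5/2) + 1 by norm_num, Real.rpow_add hpos, Real.rpow_one]
    have hc : (E ^ (-2⁻¹:ℝ))^(3:ℕ) = E ^ (-(3/2):ℝ) := by
      rw [← Real.rpow_natCast (E ^ (-2⁻¹:ℝ)) 3, ← Real.rpow_mul hpos.le]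
      norm_num
    linear_combination (12*l^5*((q.1.re - g.1.re)^2+(q.1.im - g.1.im)^2)) * hk
      + 4*l^3 * hc
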